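/- Let F : ℂ → ℂ → ℂ be such that (z,w) ↦ F z w is analytic on all of ℂ × ℂ, F is Hermitian-symmetric (F z w = conj (F (conj w) (conj z)) for all z, w ∈ ℂ), and F satisfies the differential equation deriv (fun ξ => F z ξ) w = z · F z w for all z, w ∈ ℂ. Then F 0 0 is real and F z w = F 0 0 · exp(z·w) for all z, w ∈ ℂ. -/

import Mathlib

open ComplexConjugate Complex

theorem fock_kernel_unique (F : ℂ → ℂ → ℂ)
    (hA : AnalyticOn ℂ (fun p : ℂ × ℂ => F p.1 p.2) Set.univ)
    (hSym : ∀ z w : ℂ, F z w = conj (F (conj w) (conj z)))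
    (hODE : ∀ z w : ℂ, deriv (fun ξ : ℂ => F z ξ) w = z * F z w) :
    (F 0 0).im = 0 ∧ ∀ z w : ℂ, F z w = F 0 0 * Complex.exp (z * w) := by
  have hDiff : ∀ z : ℂ, Differentiable ℂ (fun w => F z w) := by
    intro z
    have h1 : Differentiable ℂ (fun p : ℂ × ℂ => F p.1 p.2) := by
      intro p
      have := (hA p (Set.mem_univ p)).differentiableWithinAt
      rw [Set.insert_eq_self.mpr (Set.mem_univ p), differentiableWithinAt_univ] at this
      exact this
    exact fun w => (h1 (z, w)).comp w ((differentiable_const z).prodMk differentiable_id).differentiableAt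
  -- main formula with F z 0
  have key : ∀ z w : ℂ, F z w = F z 0 * Complex.exp (z * w) := by
    intro z w
    set h : ℂ → ℂ := fun w => F z w * Complex.exp (-(z * w)) with hh
    have hdiff : Differentiable ℂ h := by
      exact (hDiff z).mul ((Complex.differentiable_exp.comp ((differentiable_const z).mul differentiable_id).neg))
    have hderiv : ∀ w : ℂ, deriv h w = 0 := by
      intro w
      have h1 : HasDerivAt (fun ξ : ℂ => F z ξ) (z * F z w) w := by
        have := (hDiff z).differentiableAt (x := w) |>.hasDerivAt
        rwa [hODE z w] at this
      have h2 : HasDerivAt (fun ξ : ℂ => Complex.exp (-(z * ξ))) (-z * Complex.exp (-(z * w))) w := by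
        have hlin : HasDerivAt (fun ξ : ℂ => -(z * ξ)) (-z) w := by
          simpa using ((hasDerivAt_id w).const_mul z).fun_neg
        simpa [mul_comm] using hlin.cexp
      have := h1.fun_mul h2
      rw [this.deriv]
      ring
    have hc := is_const_of_deriv_eq_zero hdiff hderiv w 0
    have : F z w * Complex.exp (-(z * w)) = F z 0 := by simpa [hh] using hc
    have := congrArg (· * Complex.exp (z * w)) this
    simpa [mul_assoc, ← Complex.exp_add] using this
  have hz0 : ∀ z : ℂ, F z 0 = F 0 0 := by
    intro z
    have h1 := hSym z 0
    have h2 := key 0 (conj z)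
    have h3 := hSym 0 0
    simp only [map_zero] at h1
    rw [h2] at h1
    simp only [map_zero] at h3
    simp only [zero_mul, Complex.exp_zero, mul_one] at h1
    rw [h1, ← h3]
  constructor
  · have h3 := hSym 0 0
    simp only [map_zero] at h3
    exact Complex.conj_eq_iff_im.mp h3.symm
  · intro z w
    rw [key z w, hz0 z]
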